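/- Let A be a ring with property (SF), let P be a free A-module, and let L, M, N be submodules of P with L ≤ M and L ≤ N. If both extensions L ≤ M and L ≤ N are algebraic, then the extension L ≤ M + N is algebraic. -/

import Mathlib

universe u v

/-- Property (SF): every submodule of every free `A`-module is a free `A`-module. -/
def HasSF (A : Type u) [Ring A] : Prop :=
  ∀ (M : Type v) [AddCommGroup M] [Module A M], Module.Free A M →
    ∀ N : Submodule A M, Module.Free A ↥N

/-- `M` is a free factor of `N` (written `M ≤* N`): `M ≤ N` and there is a submodule
`M' ≤ N` with `M ⊓ M' = ⊥` and `M ⊔ M' = N` such that `M'` is a free module. -/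
def IsFreeFactor {A : Type*} [Ring A] {P : Type*} [AddCommGroup P] [Module A P]
    (M N : Submodule A P) : Prop :=
  M ≤ N ∧ ∃ M' : Submodule A P, M' ≤ N ∧ M ⊓ M' = ⊥ ∧ M ⊔ M' = N ∧ Module.Free A ↥M'

/-- The extension `M ≤ N` is algebraic: the only submodule `L` with `M ≤ L ≤ N`
which is a free factor of `N` is `L = N`. -/
def IsAlgExt {A : Type*} [Ring A] {P : Type*} [AddCommGroup P] [Module A P]
    (M N : Submodule A P) : Prop :=
  M ≤ N ∧ ∀ L : Submodule A P, M ≤ L → IsFreeFactor L N → L = N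

/-- Key lemma: if `K ⊓ K' = ⊥`, `K'` is free, and `M ≤ K ⊔ K'`, then `M ⊓ K` is a
free factor of `M`. -/
lemma inf_isFreeFactor {A : Type u} [Ring A] (hSF : HasSF.{u, v} A)
    {P : Type v} [AddCommGroup P] [Module A P]
    (K K' M : Submodule A P) (hdisj : K ⊓ K' = ⊥) (hle : M ≤ K ⊔ K')
    (hfree : Module.Free A ↥K') : IsFreeFactor (M ⊓ K) M := by
  classical
  set q : P →ₗ[A] P ⧸ K := K.mkQ with hq
  set g : ↥M →ₗ[A] P ⧸ K := q ∘ₗ M.subtype with hg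
  -- the image of K' in P⧸K is free
  have hK'inj : Function.Injective (q.domRestrict K') := by
    rw [← LinearMap.ker_eq_bot]
    ext x
    simp only [LinearMap.mem_ker, LinearMap.domRestrict_apply, Submodule.mem_bot, hq,
      Submodule.Quotient.mk_eq_zero, Submodule.mkQ_apply]
    constructor
    · intro hx
      have : (x : P) ∈ K ⊓ K' := ⟨hx, x.2⟩
      rw [hdisj] at this
      exact Subtype.ext this
    · rintro rfl; simp
  have hK'q_free : Module.Free A ↥(LinearMap.range (q.domRestrict K')) :=
    Module.Free.of_equiv (LinearEquiv.ofInjective _ hK'inj)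
  -- range g is contained in the image of K'
  have hrange : LinearMap.range g ≤ LinearMap.range (q.domRestrict K') := by
    rintro _ ⟨x, rfl⟩
    have hx : (x : P) ∈ K ⊔ K' := hle x.2
    rcases Submodule.mem_sup.1 hx with ⟨a, ha, b, hb, hab⟩
    refine ⟨⟨b, hb⟩, ?_⟩
    simp only [LinearMap.domRestrict_apply, hg, LinearMap.comp_apply, Submodule.subtype_apply]
    rw [← hab]
    simp only [hq, Submodule.mkQ_apply, map_add]
    rw [(Submodule.Quotient.mk_eq_zero K).2 ha, zero_add]
  -- hence range g is free by (SF)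
  have hQfree : Module.Free A ↥(LinearMap.range g) := by
    have := hSF ↥(LinearMap.range (q.domRestrict K')) hK'q_free
      (Submodule.comap (LinearMap.range (q.domRestrict K')).subtype (LinearMap.range g))
    exact Module.Free.of_equiv (Submodule.comapSubtypeEquivOfLe hrange)
  -- range g projective, so g.rangeRestrict splits
  have hproj : Module.Projective A ↥(LinearMap.range g) := by
    have := hQfree; infer_instance
  have hsurj : Function.Surjective g.rangeRestrict := LinearMap.surjective_rangeRestrict g
  obtain ⟨s, hs⟩ := Module.projective_lifting_property g.rangeRestrict LinearMap.id hsurj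
  have hsec : ∀ y : ↥(LinearMap.range g), g.rangeRestrict (s y) = y := fun y => by
    have := congrArg (fun f => f y) hs; exact this
  -- internal splitting inside ↥M
  have hker_inf : LinearMap.ker g.rangeRestrict ⊓ LinearMap.range s = ⊥ := by
    ext x
    simp only [Submodule.mem_inf, LinearMap.mem_ker, LinearMap.mem_range, Submodule.mem_bot]
    constructor
    · rintro ⟨hx, y, rfl⟩
      have := hsec y
      rw [hx] at this
      rw [← this, map_zero]
    · rintro rfl; exact ⟨map_zero _, 0, map_zero s⟩
  have hker_sup : LinearMap.ker g.rangeRestrict ⊔ LinearMap.range s = ⊤ := by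
    rw [eq_top_iff]
    intro x _
    have hx : x = (x - s (g.rangeRestrict x)) + s (g.rangeRestrict x) := by abel
    rw [hx]
    refine Submodule.add_mem_sup ?_ ⟨_, rfl⟩
    have h2 : g (s (g.rangeRestrict x)) = g x := by
      have := congrArg (Subtype.val) (hsec (g.rangeRestrict x))
      simpa using this
    simp [LinearMap.mem_ker, map_sub, h2]
  -- transfer to submodules of P
  have hkerg : LinearMap.ker g = Submodule.comap M.subtype K := by
    ext x
    simp [hg, hq, LinearMap.mem_ker, Submodule.Quotient.mk_eq_zero]
  set M' : Submodule A P := Submodule.map M.subtype (LinearMap.range s) with hM'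
  have hinj : Function.Injective M.subtype := Subtype.coe_injective
  refine ⟨inf_le_left, M', Submodule.map_subtype_le _ _, ?_, ?_, ?_⟩
  · have h3 : M ⊓ K = Submodule.map M.subtype (LinearMap.ker g.rangeRestrict) := by
      rw [LinearMap.ker_rangeRestrict, hkerg, Submodule.map_comap_subtype]
    rw [h3, hM', ← Submodule.map_inf _ hinj, hker_inf, Submodule.map_bot]
  · have h3 : M ⊓ K = Submodule.map M.subtype (LinearMap.ker g.rangeRestrict) := by
      rw [LinearMap.ker_rangeRestrict, hkerg, Submodule.map_comap_subtype]
    rw [h3, hM', ← Submodule.map_sup, hker_sup, Submodule.map_top, Submodule.range_subtype]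
  · have hsinj : Function.Injective s := by
      intro a b hab
      have := hsec a; rw [hab, hsec b] at this; exact this.symm
    have e1 : ↥(LinearMap.range s) ≃ₗ[A] ↥M' :=
      Submodule.equivMapOfInjective M.subtype hinj (LinearMap.range s)
    have e0 : ↥(LinearMap.range g) ≃ₗ[A] ↥(LinearMap.range s) := LinearEquiv.ofInjective s hsinj
    exact Module.Free.of_equiv (e0.trans e1)

set_option maxHeartbeats 1000000 in
theorem isAlgExt_sup {A : Type u} [Ring A] (hSF : HasSF.{u, v} A)
    (P : Type v) [AddCommGroup P] [Module A P] [Module.Free A P]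
    (L M N : Submodule A P) (hLM : L ≤ M) (hLN : L ≤ N)
    (hM : IsAlgExt L M) (hN : IsAlgExt L N) :
    IsAlgExt L (M ⊔ N) := by
  refine ⟨hLM.trans le_sup_left, ?_⟩
  rintro K hLK ⟨hKle, K', hK'le, hdisj, hsup, hfree⟩
  have hMK : M ≤ K := by
    have hle : M ≤ K ⊔ K' := le_sup_left.trans hsup.ge
    have hff := inf_isFreeFactor hSF K K' M hdisj hle hfree
    have h4 := hM.2 (M ⊓ K) (le_inf hLM hLK) hff
    rw [← h4]; exact inf_le_right
  have hNK : N ≤ K := by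
    have hle : N ≤ K ⊔ K' := le_sup_right.trans hsup.ge
    have hff := inf_isFreeFactor hSF K K' N hdisj hle hfree
    have := hN.2 (N ⊓ K) (le_inf hLN hLK) hff
    rw [← this]; exact inf_le_right
  exact le_antisymm hKle (sup_le hMK hNK)
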